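/- For all integers c ≥ 0 and i ≥ 0, setting k = c + i, one has Σ_{R ∈ T_{c,i}} (2^k − |R^I(R)|) = 2^{k−1} · ((1+2^c)·(2^i−1) + 2^k·c), where for a tile R of T_{c,i}, R^I(R) denotes the level set {x ∈ {0,…,2^k−1}² : A_k(x) = v_R} of the common value v_R taken by A_k on R. -/

import Mathlib

open Finset

/-- The value space `{0,…,2^k−1} × {0,…,2^k−1}`. -/
def Vk (k : ℕ) : Finset (ℕ × ℕ) := Finset.range (2 ^ k) ×ˢ Finset.range (2 ^ k)

/-- A tiling of `Vk k`: a finite collection of nonempty rectangles partitioning `Vk k`. -/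
def IsTiling (k : ℕ) (T : Finset (Finset (ℕ × ℕ))) : Prop :=
  (∀ R ∈ T, ∃ S S' : Finset ℕ, R = S ×ˢ S') ∧
    (∀ R ∈ T, R.Nonempty) ∧ (∀ R ∈ T, R ⊆ Vk k) ∧ ∀ x ∈ Vk k, ∃! R, R ∈ T ∧ x ∈ R

/-- `f`-monochromaticity of a tiling. -/
def Mono {β : Type} (f : ℕ × ℕ → β) (T : Finset (Finset (ℕ × ℕ))) : Prop :=
  ∀ R ∈ T, ∀ x ∈ R, ∀ y ∈ R, f x = f y

/-- The tile of `T` containing `x` (union of all tiles containing `x`; for a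
tiling this is exactly the unique tile containing `x`). -/
def tileOf (T : Finset (Finset (ℕ × ℕ))) (x : ℕ × ℕ) : Finset (ℕ × ℕ) :=
  (T.filter fun R => x ∈ R).sup id

/-- The ideal region of `x`: the level set of `f x` inside `Vk k`. -/
def ideal {β : Type} [DecidableEq β] (k : ℕ) (f : ℕ × ℕ → β) (x : ℕ × ℕ) : Finset (ℕ × ℕ) :=
  (Vk k).filter fun y => f y = f x

/-- Average-case objective PAR of a tiling w.r.t. the uniform distribution. -/
def avgObjPAR {β : Type} [DecidableEq β] (k : ℕ) (f : ℕ × ℕ → β)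
    (T : Finset (Finset (ℕ × ℕ))) : ℚ :=
  (∑ x ∈ Vk k, ((ideal k f x).card : ℚ) / ((tileOf T x).card : ℚ)) / 2 ^ (2 * k)

/-- Average-case PAR with respect to party 1. -/
def avgPAR1 {β : Type} [DecidableEq β] (k : ℕ) (f : ℕ × ℕ → β)
    (T : Finset (Finset (ℕ × ℕ))) : ℚ :=
  (∑ x ∈ Vk k,
      (((Finset.range (2 ^ k)).filter fun y => f (x.1, y) = f x).card : ℚ) /
        (((Finset.range (2 ^ k)).filter fun y => (x.1, y) ∈ tileOf T x).card : ℚ)) /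
    2 ^ (2 * k)

/-- Average-case PAR with respect to party 2. -/
def avgPAR2 {β : Type} [DecidableEq β] (k : ℕ) (f : ℕ × ℕ → β)
    (T : Finset (Finset (ℕ × ℕ))) : ℚ :=
  (∑ x ∈ Vk k,
      (((Finset.range (2 ^ k)).filter fun y => f (y, x.2) = f x).card : ℚ) /
        (((Finset.range (2 ^ k)).filter fun y => (y, x.2) ∈ tileOf T x).card : ℚ)) /
    2 ^ (2 * k)

/-- The millionaires function: `1` if `x1 ≥ x2`, else `2`. -/
def Mil (x : ℕ × ℕ) : ℕ := if x.2 ≤ x.1 then 1 else 2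

/-- The second-price auction function. -/
def Auc (x : ℕ × ℕ) : ℕ × ℕ := if x.2 ≤ x.1 then (1, x.2) else (2, x.1)

/-- Translate a tile by `(a, a)`. -/
def shiftTile (a : ℕ) (R : Finset (ℕ × ℕ)) : Finset (ℕ × ℕ) :=
  R.image fun p => (p.1 + a, p.2 + a)

/-- The bisection-protocol tiling `B_k`. -/
def Btile : ℕ → Finset (Finset (ℕ × ℕ))
  | 0 => {{(0, 0)}}
  | j + 1 =>
    Btile j ∪ (Btile j).image (shiftTile (2 ^ j)) ∪
      {Finset.range (2 ^ j) ×ˢ Finset.Ico (2 ^ j) (2 ^ (j + 1)),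
        Finset.Ico (2 ^ j) (2 ^ (j + 1)) ×ˢ Finset.range (2 ^ j)}

/-- The bounded-bisection-auction tiling `T_{c,i}`. -/
def BBA : ℕ → ℕ → Finset (Finset (ℕ × ℕ))
  | 0, i =>
    (Finset.range (2 ^ i)).image (fun p => Finset.Ico p (2 ^ i) ×ˢ ({p} : Finset ℕ)) ∪
      (Finset.range (2 ^ i - 1)).image fun p => ({p} : Finset ℕ) ×ˢ Finset.Ico (p + 1) (2 ^ i)
  | c + 1, i =>
    BBA c i ∪ (BBA c i).image (shiftTile (2 ^ (c + i))) ∪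
      (Finset.range (2 ^ (c + i))).image
        (fun j => Finset.Ico (2 ^ (c + i)) (2 ^ (c + i + 1)) ×ˢ ({j} : Finset ℕ)) ∪
      (Finset.range (2 ^ (c + i))).image fun j =>
        ({j} : Finset ℕ) ×ˢ Finset.Ico (2 ^ (c + i)) (2 ^ (c + i + 1))

/-- The public-good function: `true` iff `x1 + x2 ≥ 2^k − 1` ("Build"). -/
def PG (k : ℕ) (x : ℕ × ℕ) : Bool := decide (2 ^ k - 1 ≤ x.1 + x.2)

/-- The truthful public-good function: `none` = "Do Not Build". -/
def TPG (c : ℕ) (x : ℕ × ℕ) : Option (ℕ × ℕ) :=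
  if x.1 + x.2 < c then none else some (c - x.2, c - x.1)

/-- The tiling of `Vk k` into singleton cells (sealed-bid auction). -/
def sealedTiling (k : ℕ) : Finset (Finset (ℕ × ℕ)) :=
  (Vk k).image fun x => ({x} : Finset (ℕ × ℕ))

namespace Stmt11Aux

/-- The "losing price" of a point. -/
def price (x : ℕ × ℕ) : ℕ := if x.2 ≤ x.1 then x.2 else x.1 + 1

lemma price_shift (x : ℕ × ℕ) (a : ℕ) : price (x.1 + a, x.2 + a) = price x + a := by
  simp only [price]
  split_ifs <;> omega

lemma Auc_eq_one {y : ℕ × ℕ} {p : ℕ} : Auc y = (1, p) ↔ y.2 ≤ y.1 ∧ y.2 = p := by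
  unfold Auc
  split_ifs with h
  · rw [Prod.ext_iff]; simp; omega
  · rw [Prod.ext_iff]; simp; omega

lemma Auc_eq_two {y : ℕ × ℕ} {p : ℕ} : Auc y = (2, p) ↔ y.1 < y.2 ∧ y.1 = p := by
  unfold Auc
  split_ifs with h
  · rw [Prod.ext_iff]; simp; omega
  · rw [Prod.ext_iff]; simp; omega

lemma price_le {k : ℕ} {x : ℕ × ℕ} (h1 : x.1 < 2 ^ k) (h2 : x.2 < 2 ^ k) :
    price x ≤ 2 ^ k := by
  unfold price; split <;> omega

lemma ideal_card (k : ℕ) (x : ℕ × ℕ) (h1 : x.1 < 2 ^ k) (h2 : x.2 < 2 ^ k) :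
    ((Vk k).filter fun y => Auc y = Auc x).card = 2 ^ k - price x := by
  rcases le_or_gt x.2 x.1 with h | h
  · have hx : Auc x = (1, x.2) := by unfold Auc; rw [if_pos h]
    have hset : ((Vk k).filter fun y => Auc y = Auc x)
        = Finset.Ico x.2 (2 ^ k) ×ˢ ({x.2} : Finset ℕ) := by
      ext y
      simp only [Vk, Finset.mem_filter, Finset.mem_product, Finset.mem_range,
        Finset.mem_Ico, Finset.mem_singleton, hx, Auc_eq_one]
      omega
    rw [hset, Finset.card_product, Finset.card_singleton, Nat.card_Ico]
    simp only [price]; rw [if_pos h]; ring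
  · have hx : Auc x = (2, x.1) := by unfold Auc; rw [if_neg (by omega)]
    have hset : ((Vk k).filter fun y => Auc y = Auc x)
        = ({x.1} : Finset ℕ) ×ˢ Finset.Ico (x.1 + 1) (2 ^ k) := by
      ext y
      simp only [Vk, Finset.mem_filter, Finset.mem_product, Finset.mem_range,
        Finset.mem_Ico, Finset.mem_singleton, hx, Auc_eq_two]
      omega
    rw [hset, Finset.card_product, Finset.card_singleton, Nat.card_Ico]
    simp only [price]; rw [if_neg (by omega)]
    omega

lemma mem_shiftTile {a : ℕ} {R : Finset (ℕ × ℕ)} {z : ℕ × ℕ} :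
    z ∈ shiftTile a R ↔ ∃ p ∈ R, (p.1 + a, p.2 + a) = z := by
  simp [shiftTile, Finset.mem_image]

lemma BBA_struct (c i : ℕ) : ∀ R ∈ BBA c i,
    R.Nonempty ∧ ∀ x ∈ R, x.1 < 2 ^ (c + i) ∧ x.2 < 2 ^ (c + i) := by
  induction c with
  | zero =>
    intro R hR
    rw [BBA] at hR
    simp only [Nat.zero_add]
    rcases Finset.mem_union.mp hR with h | h
    · obtain ⟨p, hp, rfl⟩ := Finset.mem_image.mp h
      rw [Finset.mem_range] at hp
      constructor
      · exact ⟨(p, p), by simp [Finset.mem_product, Finset.mem_Ico]; omega⟩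
      · intro x hx
        simp only [Finset.mem_product, Finset.mem_Ico, Finset.mem_singleton] at hx
        omega
    · obtain ⟨p, hp, rfl⟩ := Finset.mem_image.mp h
      rw [Finset.mem_range] at hp
      constructor
      · exact ⟨(p, p + 1), by simp [Finset.mem_product, Finset.mem_Ico]; omega⟩
      · intro x hx
        simp only [Finset.mem_product, Finset.mem_Ico, Finset.mem_singleton] at hx
        omega
  | succ c ih =>
    intro R hR
    have hmm : 0 < 2 ^ (c + i) := pow_pos (by norm_num) _
    have hpow : 2 ^ (c + i + 1) = 2 * 2 ^ (c + i) := by rw [pow_succ]; ring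
    have hkk : c + 1 + i = c + i + 1 := by omega
    rw [BBA] at hR
    rw [hkk, hpow]
    simp only [Finset.mem_union] at hR
    rcases hR with ((h | h) | h) | h
    · obtain ⟨hne, hbd⟩ := ih R h
      exact ⟨hne, fun x hx => by have := hbd x hx; omega⟩
    · obtain ⟨R', hR', rfl⟩ := Finset.mem_image.mp h
      obtain ⟨hne, hbd⟩ := ih R' hR'
      constructor
      · obtain ⟨z, hz⟩ := hne
        exact ⟨(z.1 + 2 ^ (c + i), z.2 + 2 ^ (c + i)), mem_shiftTile.mpr ⟨z, hz, rfl⟩⟩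
      · intro x hx
        obtain ⟨p, hp, rfl⟩ := mem_shiftTile.mp hx
        have h1 := (hbd p hp).1
        have h2 := (hbd p hp).2
        constructor
        · show p.1 + 2 ^ (c + i) < 2 * 2 ^ (c + i); omega
        · show p.2 + 2 ^ (c + i) < 2 * 2 ^ (c + i); omega
    · obtain ⟨j, hj, rfl⟩ := Finset.mem_image.mp h
      rw [Finset.mem_range] at hj
      constructor
      · exact ⟨(2 ^ (c + i), j), by simp [Finset.mem_product, Finset.mem_Ico]; omega⟩
      · intro x hx
        simp only [Finset.mem_product, Finset.mem_Ico, Finset.mem_singleton] at hx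
        omega
    · obtain ⟨j, hj, rfl⟩ := Finset.mem_image.mp h
      rw [Finset.mem_range] at hj
      constructor
      · exact ⟨(j, 2 ^ (c + i)), by simp [Finset.mem_product, Finset.mem_Ico]; omega⟩
      · intro x hx
        simp only [Finset.mem_product, Finset.mem_Ico, Finset.mem_singleton] at hx
        omega

lemma arith_card (c i : ℕ) :
    2 ^ c * (2 ^ (i + 1) - 1) + c * 2 ^ (c + i) +
        (2 ^ c * (2 ^ (i + 1) - 1) + c * 2 ^ (c + i)) + 2 ^ (c + i) + 2 ^ (c + i) =
      2 ^ (c + 1) * (2 ^ (i + 1) - 1) + (c + 1) * 2 ^ (c + 1 + i) := by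
  obtain ⟨E, hE⟩ : ∃ E, 2 ^ (i + 1) = E + 1 :=
    ⟨2 ^ (i + 1) - 1, by have := pow_pos (by norm_num : 0 < 2) (i + 1); omega⟩
  rw [hE]
  simp only [Nat.add_sub_cancel]
  have e1 : c + 1 + i = c + i + 1 := by omega
  rw [e1, pow_succ 2 c, pow_succ 2 (c + i)]
  ring

lemma arith_sum (c i : ℕ) :
    2 ^ (c + i - 1) * ((1 + 2 ^ c) * (2 ^ i - 1) + 2 ^ (c + i) * c) +
        (2 ^ (c + i - 1) * ((1 + 2 ^ c) * (2 ^ i - 1) + 2 ^ (c + i) * c) +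
          (2 ^ c * (2 ^ (i + 1) - 1) + c * 2 ^ (c + i)) * 2 ^ (c + i)) +
        2 ^ (c + i) * 2 ^ (c + i) =
      2 ^ (c + 1 + i - 1) * ((1 + 2 ^ (c + 1)) * (2 ^ i - 1) + 2 ^ (c + 1 + i) * (c + 1)) := by
  rcases Nat.eq_zero_or_pos (c + i) with h | h
  · obtain ⟨rfl, rfl⟩ : c = 0 ∧ i = 0 := by omega
    norm_num
  · obtain ⟨t, ht⟩ : ∃ t, c + i = t + 1 := ⟨c + i - 1, by omega⟩
    obtain ⟨D, hD⟩ : ∃ D, 2 ^ i = D + 1 :=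
      ⟨2 ^ i - 1, by have := pow_pos (by norm_num : 0 < 2) i; omega⟩
    have e1 : c + 1 + i - 1 = t + 1 := by omega
    have e2 : c + i - 1 = t := by omega
    have e3 : c + 1 + i = t + 2 := by omega
    have h2 : 2 ^ c * (D + 1) = 2 * 2 ^ t := by
      rw [← hD, ← pow_add, ht, pow_succ]; ring
    have h3 : 2 ^ i - 1 = D := by omega
    have h4 : 2 ^ (i + 1) - 1 = 2 * D + 1 := by
      have : 2 ^ (i + 1) = 2 ^ i * 2 := pow_succ 2 i
      omega
    rw [e1, e2, e3, ht, h3, h4]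
    have h2' : (2:ℤ) ^ c * (D + 1) = 2 * 2 ^ t := by exact_mod_cast h2
    zify
    linear_combination (2 * (2:ℤ) ^ t) * h2'

lemma key (i : ℕ) : ∀ (c : ℕ) (g : Finset (ℕ × ℕ) → ℕ),
    (∀ R ∈ BBA c i, ∀ x ∈ R, g R = price x) →
    (BBA c i).card = 2 ^ c * (2 ^ (i + 1) - 1) + c * 2 ^ (c + i) ∧
      ∑ R ∈ BBA c i, g R = 2 ^ (c + i - 1) * ((1 + 2 ^ c) * (2 ^ i - 1) + 2 ^ (c + i) * c) := by
  intro c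
  induction c with
  | zero =>
    intro g hg
    have hm : 0 < 2 ^ i := pow_pos (by norm_num) _
    -- disjointness of the two families
    have hdisj : Disjoint
        ((Finset.range (2 ^ i)).image (fun p => Finset.Ico p (2 ^ i) ×ˢ ({p} : Finset ℕ)))
        ((Finset.range (2 ^ i - 1)).image fun p => ({p} : Finset ℕ) ×ˢ Finset.Ico (p + 1) (2 ^ i)) := by
      rw [Finset.disjoint_left]
      rintro R hR hR'
      obtain ⟨p, hp, rfl⟩ := Finset.mem_image.mp hR
      rw [Finset.mem_range] at hp
      obtain ⟨q, hq, hEq⟩ := Finset.mem_image.mp hR'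
      have hmem : (p, p) ∈ Finset.Ico p (2 ^ i) ×ˢ ({p} : Finset ℕ) := by
        simp [Finset.mem_product, Finset.mem_Ico]; omega
      rw [← hEq] at hmem
      simp only [Finset.mem_product, Finset.mem_Ico, Finset.mem_singleton] at hmem
      omega
    have hinj1 : ∀ p ∈ Finset.range (2 ^ i), ∀ q ∈ Finset.range (2 ^ i),
        Finset.Ico p (2 ^ i) ×ˢ ({p} : Finset ℕ) = Finset.Ico q (2 ^ i) ×ˢ ({q} : Finset ℕ) →
        p = q := by
      intro p hp q hq hEq
      rw [Finset.mem_range] at hp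
      have hmem : (p, p) ∈ Finset.Ico p (2 ^ i) ×ˢ ({p} : Finset ℕ) := by
        simp [Finset.mem_product, Finset.mem_Ico]; omega
      rw [hEq] at hmem
      simp only [Finset.mem_product, Finset.mem_Ico, Finset.mem_singleton] at hmem
      omega
    have hinj2 : ∀ p ∈ Finset.range (2 ^ i - 1), ∀ q ∈ Finset.range (2 ^ i - 1),
        ({p} : Finset ℕ) ×ˢ Finset.Ico (p + 1) (2 ^ i) = ({q} : Finset ℕ) ×ˢ Finset.Ico (q + 1) (2 ^ i) →
        p = q := by
      intro p hp q hq hEq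
      rw [Finset.mem_range] at hp
      have hmem : (p, p + 1) ∈ ({p} : Finset ℕ) ×ˢ Finset.Ico (p + 1) (2 ^ i) := by
        simp [Finset.mem_product, Finset.mem_Ico]; omega
      rw [hEq] at hmem
      simp only [Finset.mem_product, Finset.mem_Ico, Finset.mem_singleton] at hmem
      omega
    constructor
    · rw [BBA, Finset.card_union_of_disjoint hdisj,
        Finset.card_image_of_injOn hinj1, Finset.card_image_of_injOn hinj2,
        Finset.card_range, Finset.card_range]
      have : 2 ^ (i + 1) = 2 ^ i * 2 := pow_succ 2 i
      omega
    · rw [BBA, Finset.sum_union hdisj, Finset.sum_image hinj1, Finset.sum_image hinj2]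
      have hv1 : ∀ p ∈ Finset.range (2 ^ i), g (Finset.Ico p (2 ^ i) ×ˢ ({p} : Finset ℕ)) = p := by
        intro p hp
        rw [Finset.mem_range] at hp
        have hmemB : Finset.Ico p (2 ^ i) ×ˢ ({p} : Finset ℕ) ∈ BBA 0 i := by
          rw [BBA]
          exact Finset.mem_union_left _ (Finset.mem_image_of_mem _ (Finset.mem_range.mpr hp))
        have := hg _ hmemB (p, p) (by simp [Finset.mem_product, Finset.mem_Ico]; omega)
        rw [this]; simp [price]
      have hv2 : ∀ p ∈ Finset.range (2 ^ i - 1),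
          g (({p} : Finset ℕ) ×ˢ Finset.Ico (p + 1) (2 ^ i)) = p + 1 := by
        intro p hp
        rw [Finset.mem_range] at hp
        have hmemB : ({p} : Finset ℕ) ×ˢ Finset.Ico (p + 1) (2 ^ i) ∈ BBA 0 i := by
          rw [BBA]
          exact Finset.mem_union_right _ (Finset.mem_image_of_mem _ (Finset.mem_range.mpr hp))
        have := hg _ hmemB (p, p + 1) (by simp [Finset.mem_product, Finset.mem_Ico]; omega)
        rw [this]; simp [price]
      rw [Finset.sum_congr rfl hv1, Finset.sum_congr rfl hv2]
      -- ∑ p < 2^i, p + ∑ p < 2^i - 1, (p+1) = 2^(i-1) * (2 * (2^i - 1))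
      rcases Nat.eq_zero_or_pos i with rfl | hi
    -- fix indent later
      · norm_num
      · obtain ⟨s, rfl⟩ : ∃ s, i = s + 1 := ⟨i - 1, by omega⟩
        have hgauss : (∑ p ∈ Finset.range (2 ^ (s + 1)), p) * 2 = 2 ^ (s + 1) * (2 ^ (s + 1) - 1) :=
          Finset.sum_range_id_mul_two _
        have hshift : ∑ p ∈ Finset.range (2 ^ (s + 1) - 1), (p + 1)
            = ∑ p ∈ Finset.range (2 ^ (s + 1)), p := by
          obtain ⟨w, hw⟩ : ∃ w, 2 ^ (s + 1) = w + 1 :=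
            ⟨2 ^ (s + 1) - 1, by have := pow_pos (by norm_num : 0 < 2) (s + 1); omega⟩
          rw [hw]
          simp only [Nat.add_sub_cancel]
          rw [Finset.sum_range_succ' (fun p => p) w]
          simp
        rw [hshift]
        have e1 : 0 + (s + 1) - 1 = s := by omega
        have e2 : 0 + (s + 1) = s + 1 := by omega
        rw [e1, e2]
        norm_num
        have h2 : 2 ^ s * (2 * (2 ^ (s + 1) - 1)) = 2 ^ (s + 1) * (2 ^ (s + 1) - 1) := by
          rw [pow_succ]; ring
        rw [h2]
        omega
  | succ c ih =>
    intro g hg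
    have hm : 0 < 2 ^ (c + i) := pow_pos (by norm_num) _
    have hpow : 2 ^ (c + i + 1) = 2 * 2 ^ (c + i) := by rw [pow_succ]; ring
    have hstruct := BBA_struct c i
    -- membership helpers
    have memA : ∀ R ∈ BBA c i, R ∈ BBA (c + 1) i := by
      intro R hR
      rw [BBA]
      exact Finset.mem_union_left _ (Finset.mem_union_left _ (Finset.mem_union_left _ hR))
    have memB : ∀ R ∈ BBA c i, shiftTile (2 ^ (c + i)) R ∈ BBA (c + 1) i := by
      intro R hR
      rw [BBA]
      exact Finset.mem_union_left _ (Finset.mem_union_left _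
        (Finset.mem_union_right _ (Finset.mem_image_of_mem _ hR)))
    have memC : ∀ j ∈ Finset.range (2 ^ (c + i)),
        Finset.Ico (2 ^ (c + i)) (2 ^ (c + i + 1)) ×ˢ ({j} : Finset ℕ) ∈ BBA (c + 1) i := by
      intro j hj
      rw [BBA]
      exact Finset.mem_union_left _ (Finset.mem_union_right _ (Finset.mem_image_of_mem _ hj))
    have memD : ∀ j ∈ Finset.range (2 ^ (c + i)),
        ({j} : Finset ℕ) ×ˢ Finset.Ico (2 ^ (c + i)) (2 ^ (c + i + 1)) ∈ BBA (c + 1) i := by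
      intro j hj
      rw [BBA]
      exact Finset.mem_union_right _ (Finset.mem_image_of_mem _ hj)
    -- elements of shifted tiles are large
    have hBlarge : ∀ R ∈ (BBA c i).image (shiftTile (2 ^ (c + i))), (∃ z ∈ R, True) ∧
        ∀ z ∈ R, (2 ^ (c + i)) ≤ z.1 ∧ (2 ^ (c + i)) ≤ z.2 := by
      intro R hR
      obtain ⟨R', hR', rfl⟩ := Finset.mem_image.mp hR
      obtain ⟨hne, _⟩ := hstruct R' hR'
      obtain ⟨z, hz⟩ := hne
      constructor
      · exact ⟨(z.1 + (2 ^ (c + i)), z.2 + (2 ^ (c + i))), mem_shiftTile.mpr ⟨z, hz, rfl⟩, trivial⟩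
      · intro w hw
        obtain ⟨p, hp, rfl⟩ := mem_shiftTile.mp hw
        constructor
        · show (2 ^ (c + i)) ≤ p.1 + (2 ^ (c + i)); omega
        · show (2 ^ (c + i)) ≤ p.2 + (2 ^ (c + i)); omega
    -- disjointness
    have d1 : Disjoint (BBA c i) ((BBA c i).image (shiftTile (2 ^ (c + i)))) := by
      rw [Finset.disjoint_left]
      intro R hR hR'
      obtain ⟨hne, hbd⟩ := hstruct R hR
      obtain ⟨⟨z, hz, _⟩, hlarge⟩ := hBlarge R hR'
      have := (hbd z hz).1
      have := (hlarge z hz).1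
      omega
    have d2 : Disjoint (BBA c i ∪ (BBA c i).image (shiftTile (2 ^ (c + i))))
        ((Finset.range (2 ^ (c + i))).image fun j => Finset.Ico (2 ^ (c + i)) (2 ^ (c + i + 1)) ×ˢ ({j} : Finset ℕ)) := by
      rw [Finset.disjoint_left]
      intro R hR hR'
      obtain ⟨j, hj, rfl⟩ := Finset.mem_image.mp hR'
      rw [Finset.mem_range] at hj
      have hmem : ((2 ^ (c + i)), j) ∈ Finset.Ico (2 ^ (c + i)) (2 ^ (c + i + 1)) ×ˢ ({j} : Finset ℕ) := by
        simp [Finset.mem_product, Finset.mem_Ico]; omega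
      rcases Finset.mem_union.mp hR with h | h
      · have := ((hstruct _ h).2 ((2 ^ (c + i)), j) hmem).1
        simp only at this; omega
      · have := ((hBlarge _ h).2 ((2 ^ (c + i)), j) hmem).2
        simp only at this; omega
    have d3 : Disjoint (BBA c i ∪ (BBA c i).image (shiftTile (2 ^ (c + i))) ∪
          ((Finset.range (2 ^ (c + i))).image fun j => Finset.Ico (2 ^ (c + i)) (2 ^ (c + i + 1)) ×ˢ ({j} : Finset ℕ)))
        ((Finset.range (2 ^ (c + i))).image fun j => ({j} : Finset ℕ) ×ˢ Finset.Ico (2 ^ (c + i)) (2 ^ (c + i + 1))) := by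
      rw [Finset.disjoint_left]
      intro R hR hR'
      obtain ⟨j, hj, rfl⟩ := Finset.mem_image.mp hR'
      rw [Finset.mem_range] at hj
      have hmem : (j, (2 ^ (c + i))) ∈ ({j} : Finset ℕ) ×ˢ Finset.Ico (2 ^ (c + i)) (2 ^ (c + i + 1)) := by
        simp [Finset.mem_product, Finset.mem_Ico]; omega
      rcases Finset.mem_union.mp hR with h | h
      · rcases Finset.mem_union.mp h with h' | h'
        · have := ((hstruct _ h').2 (j, (2 ^ (c + i))) hmem).2
          simp only at this; omega
        · have := ((hBlarge _ h').2 (j, (2 ^ (c + i))) hmem).1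
          simp only at this; omega
      · obtain ⟨j', hj', hEq⟩ := Finset.mem_image.mp h
        rw [Finset.mem_range] at hj'
        have hmem2 : ((2 ^ (c + i)), j') ∈ Finset.Ico (2 ^ (c + i)) (2 ^ (c + i + 1)) ×ˢ ({j'} : Finset ℕ) := by
          simp [Finset.mem_product, Finset.mem_Ico]; omega
        rw [hEq] at hmem2
        simp only [Finset.mem_product, Finset.mem_Ico, Finset.mem_singleton] at hmem2
        omega
    -- injectivity
    have hshift_inj : Function.Injective (shiftTile (2 ^ (c + i))) := by
      intro R S h
      have : Function.Injective (fun p : ℕ × ℕ => (p.1 + (2 ^ (c + i)), p.2 + (2 ^ (c + i)))) := by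
        intro p q hpq
        rw [Prod.ext_iff] at hpq ⊢
        simp only at hpq
        omega
      exact Finset.image_injective this h
    have hinjC : ∀ j ∈ Finset.range (2 ^ (c + i)), ∀ j' ∈ Finset.range (2 ^ (c + i)),
        Finset.Ico (2 ^ (c + i)) (2 ^ (c + i + 1)) ×ˢ ({j} : Finset ℕ)
          = Finset.Ico (2 ^ (c + i)) (2 ^ (c + i + 1)) ×ˢ ({j'} : Finset ℕ) → j = j' := by
      intro j hj j' hj' hEq
      have hmem : ((2 ^ (c + i)), j) ∈ Finset.Ico (2 ^ (c + i)) (2 ^ (c + i + 1)) ×ˢ ({j} : Finset ℕ) := by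
        simp [Finset.mem_product, Finset.mem_Ico]; omega
      rw [hEq] at hmem
      simp only [Finset.mem_product, Finset.mem_Ico, Finset.mem_singleton] at hmem
      omega
    have hinjD : ∀ j ∈ Finset.range (2 ^ (c + i)), ∀ j' ∈ Finset.range (2 ^ (c + i)),
        ({j} : Finset ℕ) ×ˢ Finset.Ico (2 ^ (c + i)) (2 ^ (c + i + 1))
          = ({j'} : Finset ℕ) ×ˢ Finset.Ico (2 ^ (c + i)) (2 ^ (c + i + 1)) → j = j' := by
      intro j hj j' hj' hEq
      have hmem : (j, (2 ^ (c + i))) ∈ ({j} : Finset ℕ) ×ˢ Finset.Ico (2 ^ (c + i)) (2 ^ (c + i + 1)) := by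
        simp [Finset.mem_product, Finset.mem_Ico]; omega
      rw [hEq] at hmem
      simp only [Finset.mem_product, Finset.mem_Ico, Finset.mem_singleton] at hmem
      omega
    have hinjB : ∀ R ∈ BBA c i, ∀ S ∈ BBA c i, shiftTile (2 ^ (c + i)) R = shiftTile (2 ^ (c + i)) S → R = S :=
      fun R _ S _ h => hshift_inj h
    -- IH for A
    have hgA : ∀ R ∈ BBA c i, ∀ x ∈ R, g R = price x := fun R hR => hg R (memA R hR)
    obtain ⟨cardA, sumA⟩ := ih g hgA
    -- IH for B
    have hgB : ∀ R ∈ BBA c i, ∀ x ∈ R, g (shiftTile (2 ^ (c + i)) R) - (2 ^ (c + i)) = price x := by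
      intro R hR x hx
      have hx' : (x.1 + (2 ^ (c + i)), x.2 + (2 ^ (c + i))) ∈ shiftTile (2 ^ (c + i)) R := mem_shiftTile.mpr ⟨x, hx, rfl⟩
      have := hg _ (memB R hR) _ hx'
      rw [this, price_shift]
      omega
    obtain ⟨cardB', sumB'⟩ := ih (fun R => g (shiftTile (2 ^ (c + i)) R) - (2 ^ (c + i))) hgB
    have hBval : ∀ R ∈ BBA c i, g (shiftTile (2 ^ (c + i)) R) = (g (shiftTile (2 ^ (c + i)) R) - (2 ^ (c + i))) + (2 ^ (c + i)) := by
      intro R hR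
      obtain ⟨⟨z, hz⟩, _⟩ := hstruct R hR
      have hx' : (z.1 + (2 ^ (c + i)), z.2 + (2 ^ (c + i))) ∈ shiftTile (2 ^ (c + i)) R := mem_shiftTile.mpr ⟨z, hz, rfl⟩
      have := hg _ (memB R hR) _ hx'
      rw [this, price_shift]
      omega
    -- values on C and D
    have hvC : ∀ j ∈ Finset.range (2 ^ (c + i)),
        g (Finset.Ico (2 ^ (c + i)) (2 ^ (c + i + 1)) ×ˢ ({j} : Finset ℕ)) = j := by
      intro j hj
      have hjm := Finset.mem_range.mp hj
      have hmem : ((2 ^ (c + i)), j) ∈ Finset.Ico (2 ^ (c + i)) (2 ^ (c + i + 1)) ×ˢ ({j} : Finset ℕ) := by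
        simp [Finset.mem_product, Finset.mem_Ico]; omega
      have := hg _ (memC j hj) _ hmem
      rw [this]
      simp only [price]
      rw [if_pos (by show j ≤ (2 ^ (c + i)); omega)]
    have hvD : ∀ j ∈ Finset.range (2 ^ (c + i)),
        g (({j} : Finset ℕ) ×ˢ Finset.Ico (2 ^ (c + i)) (2 ^ (c + i + 1))) = j + 1 := by
      intro j hj
      have hjm := Finset.mem_range.mp hj
      have hmem : (j, (2 ^ (c + i))) ∈ ({j} : Finset ℕ) ×ˢ Finset.Ico (2 ^ (c + i)) (2 ^ (c + i + 1)) := by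
        simp [Finset.mem_product, Finset.mem_Ico]; omega
      have := hg _ (memD j hj) _ hmem
      rw [this]
      simp only [price]
      rw [if_neg (by show ¬ ((2 ^ (c + i)) ≤ j); omega)]
    constructor
    · rw [BBA, Finset.card_union_of_disjoint d3, Finset.card_union_of_disjoint d2,
        Finset.card_union_of_disjoint d1, Finset.card_image_of_injOn hinjB,
        Finset.card_image_of_injOn hinjC, Finset.card_image_of_injOn hinjD,
        Finset.card_range, cardA]
      exact arith_card c i
    · rw [BBA, Finset.sum_union d3, Finset.sum_union d2, Finset.sum_union d1,
        Finset.sum_image hinjB, Finset.sum_image hinjC, Finset.sum_image hinjD,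
        sumA, Finset.sum_congr rfl hvC, Finset.sum_congr rfl hvD,
        Finset.sum_congr rfl hBval]
      have hB2 : ∑ R ∈ BBA c i, ((g (shiftTile (2 ^ (c + i)) R) - (2 ^ (c + i))) + (2 ^ (c + i)))
          = 2 ^ (c + i - 1) * ((1 + 2 ^ c) * (2 ^ i - 1) + 2 ^ (c + i) * c)
            + (2 ^ c * (2 ^ (i + 1) - 1) + c * 2 ^ (c + i)) * (2 ^ (c + i)) := by
        rw [Finset.sum_add_distrib, sumB', Finset.sum_const, smul_eq_mul, cardA]
      rw [hB2]
      have hCD : (∑ j ∈ Finset.range (2 ^ (c + i)), j) + ∑ j ∈ Finset.range (2 ^ (c + i)), (j + 1) = (2 ^ (c + i)) * (2 ^ (c + i)) := by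
        have hg1 : (∑ j ∈ Finset.range (2 ^ (c + i)), j) * 2 = (2 ^ (c + i)) * ((2 ^ (c + i)) - 1) := Finset.sum_range_id_mul_two (2 ^ (c + i))
        have hg2 : ∑ j ∈ Finset.range (2 ^ (c + i)), (j + 1) = (∑ j ∈ Finset.range (2 ^ (c + i)), j) + (2 ^ (c + i)) := by
          rw [Finset.sum_add_distrib, Finset.sum_const, smul_eq_mul, Finset.card_range, mul_one]
        have hg3 : (2 ^ (c + i)) * ((2 ^ (c + i)) - 1) + (2 ^ (c + i)) = (2 ^ (c + i)) * (2 ^ (c + i)) := by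
          obtain ⟨u, hu⟩ : ∃ u, (2 ^ (c + i)) = u + 1 := ⟨(2 ^ (c + i)) - 1, by omega⟩
          rw [hu]
          simp only [Nat.add_sub_cancel]
          ring
        omega
      linarith [hCD, arith_sum c i]

end Stmt11Aux

/-- with `k = c + i`,
`Σ_{R ∈ T_{c,i}} (2^k − |R^I(R)|) = 2^{k−1}·((1+2^c)·(2^i−1) + 2^k·c)`, where
`R^I(R)` is the level set of the common value `v R` taken by `A_k` on `R`. -/
theorem stmt11 (c i : ℕ) (v : Finset (ℕ × ℕ) → ℕ × ℕ)
    (hv : ∀ R ∈ BBA c i, ∀ x ∈ R, Auc x = v R) :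
    ∑ R ∈ BBA c i, (2 ^ (c + i) - ((Vk (c + i)).filter fun y => Auc y = v R).card) =
      2 ^ (c + i - 1) * ((1 + 2 ^ c) * (2 ^ i - 1) + 2 ^ (c + i) * c) := by
  have hstruct := Stmt11Aux.BBA_struct c i
  have hg : ∀ R ∈ BBA c i, ∀ x ∈ R,
      (2 ^ (c + i) - ((Vk (c + i)).filter fun y => Auc y = v R).card) = Stmt11Aux.price x := by
    intro R hR x hx
    obtain ⟨_, hbd⟩ := hstruct R hR
    obtain ⟨hx1, hx2⟩ := hbd x hx
    rw [← hv R hR x hx, Stmt11Aux.ideal_card _ _ hx1 hx2]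
    have := Stmt11Aux.price_le hx1 hx2
    omega
  have := (Stmt11Aux.key i c
    (fun R => 2 ^ (c + i) - ((Vk (c + i)).filter fun y => Auc y = v R).card) hg).2
  rw [← this]
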